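/- Let w₀ = diag(−1,…,−1,1) ∈ M_{n+2}(ℝ) (with n+1 entries −1) and for x ∈ ℝⁿ\{0\} let n̄_x be the block matrix [[Iₙ, x, x], [−xᵀ, 1−‖x‖²/2, −‖x‖²/2], [xᵀ, ‖x‖²/2, 1+‖x‖²/2]]. Then w₀ · n̄_x = n̄_y · m̃ · a · n_y where y = −x/‖x‖², m̃ = diag(2xxᵀ/‖x‖² − Iₙ, 1, 1), a = exp(t H₀) with t = 2 log‖x‖ and H₀ = E_{n+1,n+2}+E_{n+2,n+1}, and n_y is the block matrix [[Iₙ, y, −y], [−yᵀ, 1−‖y‖²/2, ‖y‖²/2], [−yᵀ, −‖y‖²/2, 1+‖y‖²/2]]. -/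

import Mathlib

open Matrix

/-- The block matrix `n̄_x = [[Iₙ, x, x], [−xᵀ, 1−‖x‖²/2, −‖x‖²/2], [xᵀ, ‖x‖²/2, 1+‖x‖²/2]]`. -/
noncomputable def nbarMat (n : ℕ) (x : Fin n → ℝ) : Matrix (Fin (n + 2)) (Fin (n + 2)) ℝ :=
  fun a b =>
    if ha : (a : ℕ) < n then
      if hb : (b : ℕ) < n then (if a = b then 1 else 0) else x ⟨a, ha⟩
    else if hb : (b : ℕ) < n then
      (if (a : ℕ) = n then -x ⟨b, hb⟩ else x ⟨b, hb⟩)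
    else if (a : ℕ) = n then
      (if (b : ℕ) = n then 1 - (∑ i, x i ^ 2) / 2 else -(∑ i, x i ^ 2) / 2)
    else
      (if (b : ℕ) = n then (∑ i, x i ^ 2) / 2 else 1 + (∑ i, x i ^ 2) / 2)

/-- The block matrix `n_x = [[Iₙ, x, −x], [−xᵀ, 1−‖x‖²/2, ‖x‖²/2], [−xᵀ, −‖x‖²/2, 1+‖x‖²/2]]`. -/
noncomputable def nMat (n : ℕ) (x : Fin n → ℝ) : Matrix (Fin (n + 2)) (Fin (n + 2)) ℝ :=
  fun a b =>
    if ha : (a : ℕ) < n then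
      if hb : (b : ℕ) < n then (if a = b then 1 else 0)
      else (if (b : ℕ) = n then x ⟨a, ha⟩ else -x ⟨a, ha⟩)
    else if hb : (b : ℕ) < n then -x ⟨b, hb⟩
    else if (a : ℕ) = n then
      (if (b : ℕ) = n then 1 - (∑ i, x i ^ 2) / 2 else (∑ i, x i ^ 2) / 2)
    else
      (if (b : ℕ) = n then -(∑ i, x i ^ 2) / 2 else 1 + (∑ i, x i ^ 2) / 2)

/-- `w₀ = diag(−1,…,−1,1)` with `n+1` entries `−1`. -/
noncomputable def w0Mat (n : ℕ) : Matrix (Fin (n + 2)) (Fin (n + 2)) ℝ :=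
  fun a b => if a = b then (if (a : ℕ) = n + 1 then 1 else -1) else 0

/-- `m̃ = diag(2xxᵀ/‖x‖² − Iₙ, 1, 1)`. -/
noncomputable def mTildeMat (n : ℕ) (x : Fin n → ℝ) : Matrix (Fin (n + 2)) (Fin (n + 2)) ℝ :=
  fun a b =>
    if ha : (a : ℕ) < n then
      if hb : (b : ℕ) < n then
        2 * x ⟨a, ha⟩ * x ⟨b, hb⟩ / (∑ i, x i ^ 2) - (if a = b then 1 else 0)
      else 0
    else if (b : ℕ) < n then 0 else (if a = b then 1 else 0)

/-- `H₀ = E_{n+1,n+2} + E_{n+2,n+1}` (1-based indices). -/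
noncomputable def H0Mat (n : ℕ) : Matrix (Fin (n + 2)) (Fin (n + 2)) ℝ :=
  Matrix.single ⟨n, by omega⟩ ⟨n + 1, by omega⟩ 1
    + Matrix.single ⟨n + 1, by omega⟩ ⟨n, by omega⟩ 1

section Aux

variable {n : ℕ}

private def Bv (x : Fin n → ℝ) (a b : ℝ) : Matrix (Fin n) (Fin 2) ℝ :=
  of fun i => ![a * x i, b * x i]

private def Cv (x : Fin n → ℝ) (a b : ℝ) : Matrix (Fin 2) (Fin n) ℝ :=
  of ![fun i => a * x i, fun i => b * x i]

variable {S : ℝ} {x : Fin n → ℝ}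

private lemma dot' (hxx : ∑ i, x i * x i = S) (a c : ℝ) :
    ∑ i, a * x i * (c * x i) = a * c * S := by
  rw [Finset.sum_congr rfl (fun i _ => show a * x i * (c * x i) = a * c * (x i * x i) by ring),
    ← Finset.mul_sum, hxx]

private lemma P_BC (a b c d : ℝ) :
    Bv x a b * Cv x c d = (a * c + b * d) • vecMulVec x x := by
  ext i j
  simp [Bv, Cv, mul_apply, Fin.sum_univ_two, vecMulVec_apply]
  ring

private lemma P_CB (hxx : ∑ i, x i * x i = S) (a b c d : ℝ) :
    Cv x a b * Bv x c d = S • !![a * c, a * d; b * c, b * d] := by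
  ext j k
  fin_cases j <;> fin_cases k <;>
    simp [Bv, Cv, mul_apply, Matrix.smul_apply, dot' hxx] <;> ring

private lemma dotB (hxx : ∑ i, x i * x i = S) (c t : ℝ) :
    ∑ k, c * x k * (x k * t) = c * S * t := by
  rw [Finset.sum_congr rfl (fun i _ => show c * x i * (x i * t) = c * t * (x i * x i) by ring),
    ← Finset.mul_sum, hxx]; ring

private lemma P_MB (hxx : ∑ i, x i * x i = S) (a b : ℝ) :
    vecMulVec x x * Bv x a b = S • Bv x a b := by
  ext i j
  fin_cases j <;>
    simp [Bv, mul_apply, vecMulVec_apply, Matrix.smul_apply, dot' hxx, mul_comm, mul_assoc,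
      mul_left_comm, ← Finset.mul_sum, hxx]

private lemma P_CM (hxx : ∑ i, x i * x i = S) (a b : ℝ) :
    Cv x a b * vecMulVec x x = S • Cv x a b := by
  ext j i
  fin_cases j <;>
    simp [Cv, mul_apply, vecMulVec_apply, Matrix.smul_apply, dotB hxx, mul_comm, mul_assoc,
      mul_left_comm, ← Finset.mul_sum, hxx]

private lemma P_MM (hxx : ∑ i, x i * x i = S) :
    vecMulVec x x * vecMulVec x x = S • vecMulVec x x := by
  ext i j
  simp [mul_apply, vecMulVec_apply, Matrix.smul_apply, mul_comm, mul_assoc, mul_left_comm,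
    ← Finset.mul_sum, hxx]

private lemma P_BE (a b e f g h : ℝ) :
    Bv x a b * !![e, f; g, h] = Bv x (a * e + b * g) (a * f + b * h) := by
  ext i j
  fin_cases j <;> simp [Bv, mul_apply, Fin.sum_univ_two] <;> ring

private lemma P_EC (a b e f g h : ℝ) :
    !![e, f; g, h] * Cv x a b = Cv x (e * a + f * b) (g * a + h * b) := by
  ext j k
  fin_cases j <;> simp [Cv, mul_apply, Fin.sum_univ_two] <;> ring

end Aux

section Char

variable {n : ℕ}

private lemma nbar_block (x : Fin n → ℝ) :
    (nbarMat n x).submatrix finSumFinEquiv finSumFinEquiv =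
      fromBlocks 1 (Bv x 1 1) (Cv x (-1) 1)
        !![1 - (∑ i, x i ^ 2)/2, -(∑ i, x i ^ 2)/2;
           (∑ i, x i ^ 2)/2, 1 + (∑ i, x i ^ 2)/2] := by
  ext a b
  rcases a with i | i <;> rcases b with j | j
  · simp [nbarMat, Fin.ext_iff, one_apply]
  · fin_cases j <;> simp [nbarMat, Bv]
  · fin_cases i <;> simp [nbarMat, Cv]
  · fin_cases i <;> fin_cases j <;> simp [nbarMat] <;> ring

private lemma n_block (x : Fin n → ℝ) :
    (nMat n x).submatrix finSumFinEquiv finSumFinEquiv =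
      fromBlocks 1 (Bv x 1 (-1)) (Cv x (-1) (-1))
        !![1 - (∑ i, x i ^ 2)/2, (∑ i, x i ^ 2)/2;
           -(∑ i, x i ^ 2)/2, 1 + (∑ i, x i ^ 2)/2] := by
  ext a b
  rcases a with i | i <;> rcases b with j | j
  · simp [nMat, Fin.ext_iff, one_apply]
  · fin_cases j <;> simp [nMat, Bv]
  · fin_cases i <;> simp [nMat, Cv]
  · fin_cases i <;> fin_cases j <;> simp [nMat] <;> ring

private lemma w0_block :
    (w0Mat n).submatrix finSumFinEquiv finSumFinEquiv =
      fromBlocks (-1) 0 0 !![-1, 0; 0, 1] := by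
  ext a b
  rcases a with i | i <;> rcases b with j | j
  · simp [w0Mat, Fin.ext_iff, one_apply, show (i:ℕ) ≠ n+1 by omega]
    split_ifs <;> norm_num
  · fin_cases j <;> simp [w0Mat, Fin.ext_iff] <;> omega
  · fin_cases i <;> simp [w0Mat, Fin.ext_iff] <;> omega
  · fin_cases i <;> fin_cases j <;> simp [w0Mat, Fin.ext_iff] <;> omega

private lemma mtilde_block (x : Fin n → ℝ) :
    (mTildeMat n x).submatrix finSumFinEquiv finSumFinEquiv =
      fromBlocks ((2 * (∑ i, x i ^ 2)⁻¹) • vecMulVec x x - 1) 0 0 1 := by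
  ext a b
  rcases a with i | i <;> rcases b with j | j
  · simp [mTildeMat, Fin.ext_iff, one_apply, vecMulVec_apply, Matrix.smul_apply,
      Matrix.sub_apply, div_eq_mul_inv]
    ring_nf
  · fin_cases j <;> simp [mTildeMat]
  · fin_cases i <;> simp [mTildeMat]
  · fin_cases i <;> fin_cases j <;> simp [mTildeMat, Fin.ext_iff, one_apply] <;> omega

private lemma h0_block (t : ℝ) :
    ((t • H0Mat n)).submatrix finSumFinEquiv finSumFinEquiv =
      t • fromBlocks 0 0 0 !![0, 1; 1, 0] := by
  ext a b
  rcases a with i | i <;> rcases b with j | j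
  · simp [H0Mat, Matrix.single, Fin.ext_iff, show ¬(n = (i:ℕ)) by omega,
      show ¬(n+1 = (i:ℕ)) by omega]
  · fin_cases j <;> simp [H0Mat, Matrix.single, Fin.ext_iff] <;> omega
  · fin_cases i <;> simp [H0Mat, Matrix.single, Fin.ext_iff] <;> omega
  · fin_cases i <;> fin_cases j <;>
      simp [H0Mat, Matrix.single, Fin.ext_iff] <;> omega

end Char

lemma exp_block (n : ℕ) (t : ℝ) :
    NormedSpace.exp (t • (fromBlocks 0 0 0 !![0,1;1,0] : Matrix (Fin n ⊕ Fin 2) (Fin n ⊕ Fin 2) ℝ)) =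
      fromBlocks 1 0 0 !![Real.cosh t, Real.sinh t; Real.sinh t, Real.cosh t] := by
  set U : Matrix (Fin n ⊕ Fin 2) (Fin n ⊕ Fin 2) ℝ := fromBlocks 1 0 0 !![1,1;1,-1] with hU
  set V : Matrix (Fin n ⊕ Fin 2) (Fin n ⊕ Fin 2) ℝ := fromBlocks 1 0 0 !![2⁻¹,2⁻¹;2⁻¹,-2⁻¹] with hV
  have h2 : !![(1:ℝ),1;1,-1] * !![2⁻¹,2⁻¹;2⁻¹,-2⁻¹] = (1 : Matrix (Fin 2) (Fin 2) ℝ) := by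
    rw [Matrix.mul_fin_two, Matrix.one_fin_two]; norm_num
  have hUV : U * V = 1 := by
    rw [hU, hV, fromBlocks_multiply]
    simp [h2, fromBlocks_one]
  have hVinv : U⁻¹ = V := inv_eq_right_inv hUV
  have hUunit : IsUnit U := ⟨⟨U, V, hUV, mul_eq_one_comm.mp hUV⟩, rfl⟩
  have hd : t • (fromBlocks 0 0 0 !![0,1;1,0] : Matrix (Fin n ⊕ Fin 2) (Fin n ⊕ Fin 2) ℝ)
      = U * diagonal (Sum.elim (0 : Fin n → ℝ) ![t, -t]) * U⁻¹ := by
    rw [hVinv, hU, hV, ← fromBlocks_diagonal, fromBlocks_multiply, fromBlocks_multiply,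
      fromBlocks_smul]
    rw [fromBlocks_inj]
    refine ⟨by ext i j; simp [Matrix.diagonal_apply], by simp, by simp, ?_⟩
    ext i j
    fin_cases i <;> fin_cases j <;>
      simp [Matrix.mul_apply, Fin.sum_univ_two, Matrix.diagonal, Matrix.vecHead,
        Matrix.vecTail] <;> ring
  rw [hd, Matrix.exp_conj U _ hUunit, Matrix.exp_diagonal, hVinv]
  have hexp : NormedSpace.exp (Sum.elim (0 : Fin n → ℝ) ![t, -t])
      = Sum.elim (fun _ => (1:ℝ)) ![Real.exp t, Real.exp (-t)] := by
    rw [Pi.exp_def]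
    funext i
    rcases i with i | i
    · simp [← Real.exp_eq_exp_ℝ]
    · fin_cases i <;> simp [← Real.exp_eq_exp_ℝ]
  rw [hexp, ← fromBlocks_diagonal, hU, hV, fromBlocks_multiply, fromBlocks_multiply,
    fromBlocks_inj]
  have hone : Matrix.diagonal (fun _ => (1:ℝ) : Fin n → ℝ) = 1 := by
    simp [Matrix.diagonal_one]
  refine ⟨by simp [hone], by simp, by simp, ?_⟩
  ext i j
  fin_cases i <;> fin_cases j <;>
    simp [Matrix.mul_apply, Fin.sum_univ_two, Matrix.diagonal, Matrix.vecHead, Matrix.vecTail,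
      Real.cosh_eq, Real.sinh_eq] <;> ring


set_option maxHeartbeats 2000000

/-- Bruhat decomposition: `w₀ · n̄_x = n̄_y · m̃ · exp(t H₀) · n_y` with
`y = −x/‖x‖²` and `t = 2 log ‖x‖`. -/
theorem w0_mul_nbar_eq (n : ℕ) (x : Fin n → ℝ) (hx : x ≠ 0) :
    w0Mat n * nbarMat n x =
      nbarMat n (fun i => -x i / (∑ i, x i ^ 2)) * mTildeMat n x *
        NormedSpace.exp ((2 * Real.log (Real.sqrt (∑ i, x i ^ 2))) • H0Mat n) *
        nMat n (fun i => -x i / (∑ i, x i ^ 2)) := by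
  classical
  set S := ∑ i, x i ^ 2 with hSdef
  have hS : 0 < S := by
    obtain ⟨i, hi⟩ := Function.ne_iff.mp hx
    exact Finset.sum_pos' (fun j _ => sq_nonneg _) ⟨i, Finset.mem_univ _, sq_pos_of_ne_zero hi⟩
  have hS0 : S ≠ 0 := ne_of_gt hS
  have hxx : ∑ i, x i * x i = S := by
    rw [hSdef]; exact Finset.sum_congr rfl fun i _ => (sq (x i)).symm
  set y : Fin n → ℝ := fun i => -x i / S with hy
  have hyy2 : ∑ i, y i ^ 2 = S⁻¹ := by
    have h1 : ∀ i, y i ^ 2 = (x i * x i) * (S⁻¹ * S⁻¹) := fun i => by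
      simp only [hy]; field_simp
    rw [Finset.sum_congr rfl fun i _ => h1 i, ← Finset.sum_mul, hxx]
    field_simp
  set Φ : Matrix (Fin (n+2)) (Fin (n+2)) ℝ ≃ₐ[ℝ] Matrix (Fin n ⊕ Fin 2) (Fin n ⊕ Fin 2) ℝ :=
    Matrix.reindexAlgEquiv ℝ ℝ finSumFinEquiv.symm with hPhi
  have hΦ : ∀ M : Matrix (Fin (n+2)) (Fin (n+2)) ℝ,
      Φ M = M.submatrix finSumFinEquiv finSumFinEquiv := fun M => by
    ext a b
    simp [hPhi, Matrix.reindexAlgEquiv_apply, Matrix.reindex_apply, Matrix.submatrix_apply]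
  have hcont : Continuous Φ := by
    apply continuous_pi; intro i; apply continuous_pi; intro j
    show Continuous fun M : Matrix (Fin (n+2)) (Fin (n+2)) ℝ =>
      M (finSumFinEquiv i) (finSumFinEquiv j)
    exact (continuous_apply _).comp (continuous_apply _)
  apply Φ.injective
  have ht : 2 * Real.log (Real.sqrt S) = Real.log S := by rw [Real.log_sqrt hS.le]; ring
  have hct : Real.cosh (Real.log S) = (S + S⁻¹)/2 := by
    rw [Real.cosh_eq, Real.exp_log hS, Real.exp_neg, Real.exp_log hS]
  have hst : Real.sinh (Real.log S) = (S - S⁻¹)/2 := by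
    rw [Real.sinh_eq, Real.exp_log hS, Real.exp_neg, Real.exp_log hS]
  have hexpΦ : Φ (NormedSpace.exp ((2 * Real.log (Real.sqrt S)) • H0Mat n)) =
      fromBlocks 1 0 0 !![(S + S⁻¹)/2, (S - S⁻¹)/2; (S - S⁻¹)/2, (S + S⁻¹)/2] := by
    have hm : Φ (NormedSpace.exp ((2 * Real.log (Real.sqrt S)) • H0Mat n)) =
        NormedSpace.exp (Φ ((2 * Real.log (Real.sqrt S)) • H0Mat n)) := by
      letI : NormedRing (Matrix (Fin (n+2)) (Fin (n+2)) ℝ) := Matrix.linftyOpNormedRing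
      letI : NormedAlgebra ℝ (Matrix (Fin (n+2)) (Fin (n+2)) ℝ) := Matrix.linftyOpNormedAlgebra
      letI : NormedRing (Matrix (Fin n ⊕ Fin 2) (Fin n ⊕ Fin 2) ℝ) := Matrix.linftyOpNormedRing
      letI : NormedAlgebra ℝ (Matrix (Fin n ⊕ Fin 2) (Fin n ⊕ Fin 2) ℝ) :=
        Matrix.linftyOpNormedAlgebra
      let +nondep : NormedAlgebra ℚ (Matrix (Fin (n+2)) (Fin (n+2)) ℝ) :=
        .restrictScalars ℚ ℝ (Matrix (Fin (n+2)) (Fin (n+2)) ℝ)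
      exact NormedSpace.map_exp Φ hcont _
    rw [hm, hΦ, ht, h0_block, exp_block, hct, hst]
  rw [_root_.map_mul, _root_.map_mul, _root_.map_mul, _root_.map_mul, hexpΦ, hΦ, hΦ, hΦ, hΦ, hΦ, w0_block, nbar_block,
    nbar_block, mtilde_block, n_block, hyy2, ← hSdef]
  have hBy : Bv y 1 1 = Bv x (-S⁻¹) (-S⁻¹) := by
    ext i j; fin_cases j <;> simp [Bv, hy, div_eq_mul_inv] <;> ring
  have hCy : Cv y (-1) 1 = Cv x S⁻¹ (-S⁻¹) := by
    ext j i; fin_cases j <;> simp [Cv, hy, div_eq_mul_inv] <;> ring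
  have hBy' : Bv y 1 (-1) = Bv x (-S⁻¹) S⁻¹ := by
    ext i j; fin_cases j <;> simp [Bv, hy, div_eq_mul_inv] <;> ring
  have hCy' : Cv y (-1) (-1) = Cv x S⁻¹ S⁻¹ := by
    ext j i; fin_cases j <;> simp [Cv, hy, div_eq_mul_inv] <;> ring
  rw [hBy, hCy, hBy', hCy']
  simp only [fromBlocks_multiply, Matrix.mul_one, Matrix.one_mul, Matrix.mul_zero,
    Matrix.zero_mul, add_zero, zero_add, Matrix.neg_mul, Matrix.mul_neg, Matrix.sub_mul,
    Matrix.add_mul, Matrix.mul_add,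
    Matrix.mul_sub, smul_mul_assoc, mul_smul_comm, Matrix.smul_mul, Matrix.mul_smul, P_BC, P_CB hxx, P_MB hxx, P_CM hxx,
    P_MM hxx, P_BE, P_EC, smul_smul, Matrix.mul_fin_two, neg_neg]
  rw [fromBlocks_inj]
  refine ⟨?_, ?_, ?_, ?_⟩
  · ext i j
    by_cases hij : i = j <;>
      simp [hij, vecMulVec_apply, Bv, Cv, one_apply, Matrix.smul_apply, Matrix.sub_apply,
        Matrix.add_apply, Matrix.neg_apply] <;>
      (field_simp; try ring)
  · ext i j
    fin_cases j <;>
      simp [vecMulVec_apply, Bv, Cv, Matrix.smul_apply, Matrix.sub_apply, Matrix.add_apply,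
        Matrix.neg_apply] <;>
      (field_simp; ring)
  · ext i j
    fin_cases i <;>
      simp [vecMulVec_apply, Bv, Cv, Matrix.smul_apply, Matrix.sub_apply, Matrix.add_apply,
        Matrix.neg_apply] <;>
      (field_simp; ring)
  · ext i j
    fin_cases i <;> fin_cases j <;>
      simp [Matrix.smul_apply, Matrix.sub_apply, Matrix.add_apply, Matrix.neg_apply] <;>
      (field_simp; ring)
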